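/- In the game WYT(a,b) (a, b positive integers), the Smith remoteness function satisfies R(x_m, y_m) = 2m for every m ∈ ℤ_{≥0}, where (x_m, y_m) is the m-th P-position defined by the recursion x_0 = y_0 = 0, x_m = mex_b{x_0, y_0, …, x_{m−1}, y_{m−1}}, y_m = x_m + am. -/

import Mathlib

/-- A move of the game WYT(a,b): reduce `x` by `ε` and `y` by `δ` with
`0 ≤ ε ≤ x`, `0 ≤ δ ≤ y`, `ε + δ > 0`, and `|ε - δ| < a` or `min(ε,δ) < b`. -/
def WytMove (a b : ℕ) (p q : ℕ × ℕ) : Prop :=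
  q.1 ≤ p.1 ∧ q.2 ≤ p.2 ∧ q ≠ p ∧
    ((((p.1 - q.1 : ℕ) : ℤ) - ((p.2 - q.2 : ℕ) : ℤ)).natAbs < a ∨
      min (p.1 - q.1) (p.2 - q.2) < b)

/-- The minimum `b`-excludant of a finite set `S = {s₁ < s₂ < … < sₗ}` of
nonnegative integers: `0` if `S = ∅`, and otherwise `sᵢ + b` where `i` is the
smallest index with `s_{i+1} - sᵢ > b` (with `s_{ℓ+1} = +∞`), i.e. `sᵢ` is the
smallest element of `S` followed by a gap larger than `b`. -/
noncomputable def mexb (b : ℕ) (S : Finset ℕ) : ℕ :=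
  if S.Nonempty then sInf {s : ℕ | s ∈ S ∧ ∀ t ∈ S, s < t → s + b < t} + b else 0

/-- The set `{x₀, y₀, …, x_{m-1}, y_{m-1}}` of the first `m` pairs of the
sequence of P-positions of WYT(a,b). -/
noncomputable def wytF (a b : ℕ) : ℕ → Finset ℕ
  | 0 => ∅
  | m + 1 => wytF a b m ∪ {mexb b (wytF a b m), mexb b (wytF a b m) + a * m}

/-- `x_m = mex_b {x₀, y₀, …, x_{m-1}, y_{m-1}}` (so `x₀ = 0`). -/
noncomputable def wytX (a b m : ℕ) : ℕ := mexb b (wytF a b m)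

/-- `y_m = x_m + a·m` (so `y₀ = 0`). -/
noncomputable def wytY (a b m : ℕ) : ℕ := wytX a b m + a * m

/-- The P-positions of WYT(a,b): the pairs `(x_m, y_m)` and `(y_m, x_m)`. -/
def WytP (a b : ℕ) (p : ℕ × ℕ) : Prop :=
  ∃ m : ℕ, p = (wytX a b m, wytY a b m) ∨ p = (wytY a b m, wytX a b m)

/-- Smith's remoteness function for an impartial game with move relation `mv`. -/
def IsRemoteness {α : Type*} (mv : α → α → Prop) (R : α → ℕ) : Prop :=
  ∀ x : α,
    ((∀ y, ¬ mv x y) → R x = 0) ∧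
    ((∃ y, mv x y ∧ Even (R y)) →
      ∃ y, mv x y ∧ Even (R y) ∧ R x = R y + 1 ∧ ∀ z, mv x z → Even (R z) → R y ≤ R z) ∧
    ((∃ y, mv x y) → (∀ y, mv x y → ¬ Even (R y)) →
      ∃ y, mv x y ∧ R x = R y + 1 ∧ ∀ z, mv x z → R z ≤ R y)

namespace Wyt

lemma mexb_spec {b : ℕ} {S : Finset ℕ} (h : S.Nonempty) :
    ∃ s, s ∈ S ∧ (∀ t ∈ S, s < t → s + b < t) ∧ mexb b S = s + b ∧
      (∀ s' ∈ S, (∀ t ∈ S, s' < t → s' + b < t) → s ≤ s') := by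
  have hC : {s : ℕ | s ∈ S ∧ ∀ t ∈ S, s < t → s + b < t}.Nonempty := by
    obtain ⟨s, hs, hmax⟩ := S.exists_max_image (fun x => x) h
    exact ⟨s, hs, fun t ht hlt => absurd (hmax t ht) (by omega)⟩
  have hmem := Nat.sInf_mem hC
  refine ⟨sInf {s : ℕ | s ∈ S ∧ ∀ t ∈ S, s < t → s + b < t}, hmem.1, hmem.2, ?_, ?_⟩
  · simp [mexb, h]
  · exact fun s' hs' hgap => Nat.sInf_le ⟨hs', hgap⟩

lemma mexb_empty (b : ℕ) : mexb b ∅ = 0 := by simp [mexb]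

lemma mexb_not_mem {b : ℕ} (hb : 0 < b) (S : Finset ℕ) : mexb b S ∉ S := by
  by_cases h : S.Nonempty
  · obtain ⟨s, hs, hgap, heq, -⟩ := mexb_spec (b := b) h
    intro hmem
    rw [heq] at hmem
    exact absurd (hgap _ hmem (by omega)) (by omega)
  · simp at h; simp [h, mexb]

lemma mexb_gap {b : ℕ} {S : Finset ℕ} {t : ℕ} (ht : t ∈ S) (hlt : t < mexb b S) :
    t + b ≤ mexb b S := by
  obtain ⟨s, hs, hgap, heq, -⟩ := mexb_spec (b := b) ⟨t, ht⟩
  rw [heq] at hlt ⊢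
  rcases lt_or_ge s t with h | h
  · exact absurd (hgap t ht h) (by omega)
  · omega

lemma mexb_le_of_gap {b : ℕ} {S : Finset ℕ} {t : ℕ} (ht : t ∈ S)
    (hgap : ∀ u ∈ S, t < u → t + b < u) : mexb b S ≤ t + b := by
  obtain ⟨s, hs, hgap', heq, hmin⟩ := mexb_spec (b := b) ⟨t, ht⟩
  rw [heq]
  exact Nat.add_le_add_right (hmin t ht hgap) b

end Wyt

namespace Wyt

variable {a b : ℕ}

lemma wytF_succ (a b m : ℕ) :
    wytF a b (m + 1) = wytF a b m ∪ {wytX a b m, wytY a b m} := rfl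

lemma mem_wytF {t m : ℕ} :
    t ∈ wytF a b m ↔ ∃ j < m, t = wytX a b j ∨ t = wytY a b j := by
  induction m with
  | zero => simp [wytF]
  | succ m ih =>
    rw [wytF_succ]
    simp only [Finset.mem_union, Finset.mem_insert, Finset.mem_singleton, ih]
    constructor
    · rintro (⟨j, hj, h⟩ | h | h)
      · exact ⟨j, by omega, h⟩
      · exact ⟨m, by omega, Or.inl h⟩
      · exact ⟨m, by omega, Or.inr h⟩
    · rintro ⟨j, hj, h⟩
      rcases Nat.lt_succ_iff_lt_or_eq.1 hj with hj' | rfl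
      · exact Or.inl ⟨j, hj', h⟩
      · rcases h with h | h
        · exact Or.inr (Or.inl h)
        · exact Or.inr (Or.inr h)

lemma wytX_mem {j m : ℕ} (h : j < m) : wytX a b j ∈ wytF a b m :=
  mem_wytF.2 ⟨j, h, Or.inl rfl⟩

lemma wytY_mem {j m : ℕ} (h : j < m) : wytY a b j ∈ wytF a b m :=
  mem_wytF.2 ⟨j, h, Or.inr rfl⟩

lemma wytX_zero : wytX a b 0 = 0 := by
  simp [wytX, wytF, mexb_empty]

lemma wytY_zero : wytY a b 0 = 0 := by
  simp [wytY, wytX_zero]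

lemma wytX_le_wytY (m : ℕ) : wytX a b m ≤ wytY a b m := Nat.le_add_right _ _

lemma wytX_not_mem (hb : 0 < b) (m : ℕ) : wytX a b m ∉ wytF a b m :=
  mexb_not_mem hb _

/-- the gap property: elements of `F_m` below `x_m` are at distance `≥ b`. -/
lemma gap_lemma {t m : ℕ} (ht : t ∈ wytF a b m) (hlt : t < wytX a b m) :
    t + b ≤ wytX a b m :=
  mexb_gap ht hlt

lemma wytX_step (hb : 0 < b) (m : ℕ) : wytX a b m + b ≤ wytX a b (m + 1) := by
  have hmem : wytX a b m ∈ wytF a b (m + 1) := wytX_mem (Nat.lt_succ_self m)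
  obtain ⟨s, hs, hgap, heq, -⟩ :=
    mexb_spec (b := b) (S := wytF a b (m + 1)) ⟨_, hmem⟩
  have hx1 : wytX a b (m + 1) = s + b := heq
  rcases lt_or_ge s (wytX a b m) with hlt | hle
  · -- s < x_m : contradiction
    exfalso
    have hsF : s ∈ wytF a b m := by
      rw [wytF_succ] at hs
      simp only [Finset.mem_union, Finset.mem_insert, Finset.mem_singleton] at hs
      have hxy : wytX a b m ≤ wytY a b m := wytX_le_wytY m
      rcases hs with h | h | h
      · exact h
      · omega
      · omega
    have hgap' : ∀ u ∈ wytF a b m, s < u → s + b < u := fun u hu =>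
      hgap u (by rw [wytF_succ]; exact Finset.mem_union_left _ hu)
    have h1 : wytX a b m ≤ s + b := mexb_le_of_gap hsF hgap'
    have h2 : s + b < wytX a b m := hgap _ hmem hlt
    omega
  · omega

lemma wytX_mono (hb : 0 < b) {j m : ℕ} (h : j < m) :
    wytX a b j + b * (m - j) ≤ wytX a b m := by
  induction m with
  | zero => omega
  | succ m ih =>
    have hs := wytX_step (a := a) hb m
    rcases Nat.lt_succ_iff_lt_or_eq.1 h with h' | rfl
    · have := ih h'
      have : b * (m + 1 - j) ≤ b * (m - j) + b := by
        rw [← Nat.mul_succ]; exact Nat.mul_le_mul_left _ (by omega)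
      omega
    · simpa using hs

lemma wytX_lt_wytX (hb : 0 < b) {j m : ℕ} (h : j < m) : wytX a b j < wytX a b m := by
  have := wytX_mono (a := a) hb h
  have : 0 < b * (m - j) := Nat.mul_pos hb (by omega)
  omega

lemma wytY_lt_wytY (ha : 0 < a) (hb : 0 < b) {j m : ℕ} (h : j < m) :
    wytY a b j < wytY a b m := by
  have := wytX_lt_wytX (a := a) hb h
  have : a * j < a * m := (Nat.mul_lt_mul_left ha).2 h
  simp only [wytY]; omega

lemma wytX_ge (hb : 0 < b) (m : ℕ) : b * m ≤ wytX a b m := by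
  rcases Nat.eq_zero_or_pos m with rfl | hm
  · simp
  · have h1 := wytX_mono (a := a) hb hm
    rw [wytX_zero, Nat.sub_zero] at h1; omega

/-- density: every `n` has an element of the X/Y sequence in `(n-b, n]`. -/
lemma density (hb : 0 < b) (n : ℕ) :
    ∃ t, (∃ j, t = wytX a b j ∨ t = wytY a b j) ∧ t ≤ n ∧ n < t + b := by
  set m := n + 1 with hm
  have hxm : n < wytX a b m := by
    have h1 := wytX_ge (a := a) hb m
    have h2 : m ≤ b * m := Nat.le_mul_of_pos_left m hb
    omega
  -- the set of elements of F_m that are ≤ n; nonempty since 0 = x_0 ∈ F_m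
  have h0 : (0 : ℕ) ∈ wytF a b m := by
    have : wytX a b 0 ∈ wytF a b m := wytX_mem (by omega)
    rwa [wytX_zero] at this
  have hne : ((wytF a b m).filter (fun t => t ≤ n)).Nonempty :=
    ⟨0, Finset.mem_filter.2 ⟨h0, Nat.zero_le n⟩⟩
  obtain ⟨t, htmem, htmax⟩ :=
    ((wytF a b m).filter (fun t => t ≤ n)).exists_max_image (fun x => x) hne
  rw [Finset.mem_filter] at htmem
  obtain ⟨htF, htn⟩ := htmem
  refine ⟨t, ?_, htn, ?_⟩
  · obtain ⟨j, -, hj⟩ := mem_wytF.1 htF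
    exact ⟨j, hj⟩
  · by_contra hcon
    push_neg at hcon
    -- then t has the gap property in F_m, so x_m ≤ t + b ≤ n, contradiction
    have hgap : ∀ u ∈ wytF a b m, t < u → t + b < u := by
      intro u hu hlt
      rcases le_or_gt u n with h' | h'
      · have := htmax u (Finset.mem_filter.2 ⟨hu, h'⟩)
        omega
      · omega
    have := mexb_le_of_gap htF hgap
    have : wytX a b m ≤ t + b := this
    omega

end Wyt

namespace Wyt

variable {a b : ℕ}

lemma wytX_le_of_le (hb : 0 < b) {j k : ℕ} (h : j ≤ k) : wytX a b j ≤ wytX a b k := by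
  rcases eq_or_lt_of_le h with rfl | h'
  · exact le_rfl
  · exact (wytX_lt_wytX hb h').le

lemma wytY_le_of_le (ha : 0 < a) (hb : 0 < b) {j k : ℕ} (h : j ≤ k) :
    wytY a b j ≤ wytY a b k := by
  rcases eq_or_lt_of_le h with rfl | h'
  · exact le_rfl
  · exact (wytY_lt_wytY ha hb h').le

lemma P_zero : WytP a b (0, 0) := ⟨0, by simp [wytX_zero, wytY_zero]⟩

lemma P_swap {p : ℕ × ℕ} (h : WytP a b p) : WytP a b (p.2, p.1) := by
  obtain ⟨m, h | h⟩ := h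
  · exact ⟨m, Or.inr (by rw [h])⟩
  · exact ⟨m, Or.inl (by rw [h])⟩

lemma move_swap {p q : ℕ × ℕ} (h : WytMove a b p q) :
    WytMove a b (p.2, p.1) (q.2, q.1) := by
  obtain ⟨h1, h2, h3, h4⟩ := h
  refine ⟨h2, h1, by simp [Prod.ext_iff] at h3 ⊢; tauto, ?_⟩
  rcases h4 with h | h
  · exact Or.inl (by omega)
  · exact Or.inr (by omega)

lemma move_sum_lt {p q : ℕ × ℕ} (h : WytMove a b p q) : q.1 + q.2 < p.1 + p.2 := by
  obtain ⟨h1, h2, h3, -⟩ := h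
  rcases Nat.lt_or_ge (q.1 + q.2) (p.1 + p.2) with h | h
  · exact h
  · exfalso; apply h3; ext <;> omega

lemma no_move_zero (q : ℕ × ℕ) : ¬ WytMove a b (0, 0) q := by
  rintro ⟨h1, h2, h3, -⟩
  exact h3 (by ext <;> simp_all)

/-- (A): there is no move between P-positions. -/
lemma P_no_move_P (ha : 0 < a) (hb : 0 < b) {p q : ℕ × ℕ}
    (hp : WytP a b p) (hmv : WytMove a b p q) (hq : WytP a b q) : False := by
  -- reduce to the case p = (x_m, y_m)
  have core : ∀ m q', WytMove a b (wytX a b m, wytY a b m) q' → WytP a b q' → False := by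
    intro m q' hmv' hq'
    obtain ⟨h1, h2, hne, hcond⟩ := hmv'
    have hYm : wytY a b m = wytX a b m + a * m := rfl
    obtain ⟨k, hk | hk⟩ := hq'
    · -- q' = (x_k, y_k)
      subst hk
      simp only at h1 h2 hne hcond
      have hkm : k < m := by
        rcases Nat.lt_or_ge k m with h | h
        · exact h
        · rcases eq_or_lt_of_le h with rfl | h'
          · exact absurd rfl hne
          · exact absurd h1 (not_le.2 (wytX_lt_wytX hb h'))
      have hb1 : wytX a b k + b ≤ wytX a b m := by
        have := wytX_mono (a := a) hb hkm
        have : b ≤ b * (m - k) := Nat.le_mul_of_pos_right b (by omega)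
        omega
      have ha1 : a * k + a ≤ a * m := by
        calc a * k + a = a * (k + 1) := by ring
        _ ≤ a * m := Nat.mul_le_mul_left a hkm
      have hYk : wytY a b k = wytX a b k + a * k := rfl
      rcases hcond with h | h
      · simp only [hYm, hYk] at h; omega
      · simp only [hYm, hYk] at h; omega
    · -- q' = (y_k, x_k)
      subst hk
      simp only at h1 h2 hne hcond
      have hYk : wytY a b k = wytX a b k + a * k := rfl
      rcases Nat.lt_or_ge k m with hkm | hkm
      · -- k < m
        have hm1 : 1 ≤ m := by omega
        have hne' : wytY a b k ≠ wytX a b m := by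
          intro hEq
          exact wytX_not_mem (a := a) hb m (hEq ▸ wytY_mem hkm)
        have hgap : wytY a b k + b ≤ wytX a b m :=
          gap_lemma (wytY_mem hkm) (by omega)
        have hxy : wytX a b k ≤ wytY a b k := wytX_le_wytY k
        have ha1 : a ≤ a * m := Nat.le_mul_of_pos_right a (by omega)
        rcases hcond with h | h
        · simp only [hYm, hYk] at h; omega
        · simp only [hYm, hYk] at h; omega
      · -- k ≥ m : everything collapses to (0,0)
        have hY : wytY a b m ≤ wytY a b k := wytY_le_of_le ha hb hkm
        have hxy : wytX a b m ≤ wytY a b m := wytX_le_wytY m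
        -- y_k ≤ x_m ≤ y_m ≤ y_k
        have hm0 : wytY a b k = wytX a b m ∧ wytX a b m = wytY a b m := by omega
        have ham : a * m = 0 := by
          have := hm0.2; simp only [hYm] at this; omega
        have hm' : m = 0 := by
          rcases Nat.eq_zero_or_pos m with h | h
          · exact h
          · exact absurd ham (by positivity)
        subst hm'
        rw [wytX_zero, wytY_zero] at *
        apply hne
        have h3 : wytY a b k = 0 := by omega
        have h4 : wytX a b k = 0 := by have := wytX_le_wytY (a := a) (b := b) k; omega
        rw [h3, h4]
  obtain ⟨m, hp | hp⟩ := hp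
  · exact core m q (hp ▸ hmv) hq
  · subst hp
    have := move_swap hmv
    exact core m (q.2, q.1) this (P_swap hq)

/-- (B): from any non-P position there is a move to a P-position. -/
lemma exists_move_P (ha : 0 < a) (hb : 0 < b) {p : ℕ × ℕ} (hp : ¬ WytP a b p) :
    ∃ q, WytMove a b p q ∧ WytP a b q := by
  have core : ∀ x y : ℕ, x ≤ y → ¬ WytP a b (x, y) →
      ∃ q, WytMove a b (x, y) q ∧ WytP a b q := by
    intro x y hxy hnp
    set k := (y - x) / a with hk
    have hdm := Nat.div_add_mod (y - x) a
    have hml := Nat.mod_lt (y - x) ha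
    rw [← hk] at hdm
    have hak : a * k ≤ y - x := by omega
    have hak2 : y - x < a * k + a := by omega
    rcases le_or_gt (wytX a b k) x with hx | hx
    · -- move to (x_k, y_k)
      refine ⟨(wytX a b k, wytY a b k), ⟨hx, ?_, ?_, ?_⟩, ⟨k, Or.inl rfl⟩⟩
      · show wytY a b k ≤ y
        have : wytY a b k = wytX a b k + a * k := rfl
        omega
      · intro hEq
        exact hnp ⟨k, Or.inl hEq.symm⟩
      · refine Or.inl ?_
        have : wytY a b k = wytX a b k + a * k := rfl
        simp only
        omega
    · -- density gives an element t ∈ (x - b, x]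
      obtain ⟨t, ⟨j, hj⟩, ht1, ht2⟩ := density (a := a) hb x
      rcases hj with hj | hj
      · -- t = x_j : move to (x_j, y_j)
        have hjk : j < k := by
          by_contra hcon
          push_neg at hcon
          exact absurd (le_trans (wytX_le_of_le hb hcon) (hj ▸ ht1)) (not_le.2 hx)
        have haj : a * j + a ≤ a * k := by
          calc a * j + a = a * (j + 1) := by ring
          _ ≤ a * k := Nat.mul_le_mul_left a hjk
        refine ⟨(wytX a b j, wytY a b j), ⟨hj ▸ ht1, ?_, ?_, ?_⟩, ⟨j, Or.inl rfl⟩⟩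
        · show wytY a b j ≤ y
          have : wytY a b j = wytX a b j + a * j := rfl
          omega
        · intro hEq
          exact hnp ⟨j, Or.inl hEq.symm⟩
        · refine Or.inr ?_
          simp only
          omega
      · -- t = y_j : move to (y_j, x_j)
        have hxyj : wytX a b j ≤ wytY a b j := wytX_le_wytY j
        refine ⟨(wytY a b j, wytX a b j), ⟨hj ▸ ht1, by omega, ?_, ?_⟩, ⟨j, Or.inr rfl⟩⟩
        · intro hEq
          exact hnp ⟨j, Or.inr hEq.symm⟩
        · refine Or.inr ?_
          simp only
          omega
  rcases le_or_gt p.1 p.2 with h | h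
  · obtain ⟨q, hq1, hq2⟩ := core p.1 p.2 h (by simpa using hp)
    exact ⟨q, by simpa using hq1, hq2⟩
  · have hp' : ¬ WytP a b (p.2, p.1) := fun h' => hp (by simpa using P_swap h')
    obtain ⟨q, hq1, hq2⟩ := core p.2 p.1 h.le hp'
    exact ⟨(q.2, q.1), by simpa using move_swap hq1, P_swap hq2⟩

end Wyt

namespace Wyt

variable {a b : ℕ}

/-- uniqueness of the remoteness function. -/
lemma R_unique {R1 R2 : ℕ × ℕ → ℕ} (h1 : IsRemoteness (WytMove a b) R1)
    (h2 : IsRemoteness (WytMove a b) R2) : ∀ p, R1 p = R2 p := by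
  suffices H : ∀ n p, p.1 + p.2 = n → R1 p = R2 p from fun p => H _ p rfl
  intro n
  induction n using Nat.strong_induction_on with
  | _ n ih =>
    intro p hp
    have IH : ∀ q, WytMove a b p q → R1 q = R2 q := fun q hq =>
      ih _ (hp ▸ move_sum_lt hq) q rfl
    by_cases hterm : ∀ q, ¬ WytMove a b p q
    · rw [(h1 p).1 hterm, (h2 p).1 hterm]
    · push_neg at hterm
      by_cases hev : ∃ q, WytMove a b p q ∧ Even (R1 q)
      · obtain ⟨y1, hy1m, hy1e, hy1eq, hy1min⟩ := (h1 p).2.1 hev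
        have hev2 : ∃ q, WytMove a b p q ∧ Even (R2 q) := by
          obtain ⟨q, hq, hqe⟩ := hev; exact ⟨q, hq, IH q hq ▸ hqe⟩
        obtain ⟨y2, hy2m, hy2e, hy2eq, hy2min⟩ := (h2 p).2.1 hev2
        have e12 : R1 y2 = R2 y2 := IH _ hy2m
        have e11 : R1 y1 = R2 y1 := IH _ hy1m
        have a1 : R1 y1 ≤ R1 y2 := hy1min _ hy2m (by rw [e12]; exact hy2e)
        have a2 : R2 y2 ≤ R2 y1 := hy2min _ hy1m (by rw [← e11]; exact hy1e)
        omega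
      · push_neg at hev
        have hev2 : ∀ q, WytMove a b p q → ¬ Even (R2 q) := fun q hq =>
          (IH q hq) ▸ hev q hq
        obtain ⟨y1, hy1m, hy1eq, hy1max⟩ := (h1 p).2.2 hterm hev
        obtain ⟨y2, hy2m, hy2eq, hy2max⟩ := (h2 p).2.2 hterm hev2
        have e12 : R1 y2 = R2 y2 := IH _ hy2m
        have e11 : R1 y1 = R2 y1 := IH _ hy1m
        have a1 : R1 y2 ≤ R1 y1 := hy1max _ hy2m
        have a2 : R2 y1 ≤ R2 y2 := hy2max _ hy1m
        omega

lemma move_swap' {p q : ℕ × ℕ} (h : WytMove a b (p.2, p.1) (q.2, q.1)) :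
    WytMove a b p q := by
  have := move_swap h
  simpa using this

/-- the remoteness function is symmetric. -/
lemma R_swap {R : ℕ × ℕ → ℕ} (hR : IsRemoteness (WytMove a b) R) (p : ℕ × ℕ) :
    R (p.2, p.1) = R p := by
  have hR' : IsRemoteness (WytMove a b) (fun p => R (p.2, p.1)) := by
    intro x
    obtain ⟨c1, c2, c3⟩ := hR (x.2, x.1)
    refine ⟨?_, ?_, ?_⟩
    · intro hterm
      exact c1 fun y hy => hterm (y.2, y.1) (move_swap' (by simpa using hy))
    · rintro ⟨y, hy, hye⟩
      obtain ⟨y', hy', hy'e, hy'eq, hy'min⟩ :=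
        c2 ⟨(y.2, y.1), by simpa using move_swap hy, hye⟩
      refine ⟨(y'.2, y'.1), move_swap' (by simpa using hy'), by simpa using hy'e,
        by simpa using hy'eq, ?_⟩
      intro z hz hze
      simpa using hy'min (z.2, z.1) (by simpa using move_swap hz) hze
    · rintro ⟨y, hy⟩ hodd
      obtain ⟨y', hy', hy'eq, hy'max⟩ := c3 ⟨(y.2, y.1), by simpa using move_swap hy⟩
        (fun z hz => by simpa using hodd (z.2, z.1) (move_swap' (by simpa using hz)))
      refine ⟨(y'.2, y'.1), move_swap' (by simpa using hy'), by simpa using hy'eq, ?_⟩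
      intro z hz
      simpa using hy'max (z.2, z.1) (by simpa using move_swap hz)
  exact R_unique hR' hR p

/-- parity: even remoteness values are exactly the P-positions. -/
lemma parity (ha : 0 < a) (hb : 0 < b) {R : ℕ × ℕ → ℕ}
    (hR : IsRemoteness (WytMove a b) R) : ∀ p, Even (R p) ↔ WytP a b p := by
  suffices H : ∀ n p, p.1 + p.2 = n → (Even (R p) ↔ WytP a b p) from fun p => H _ p rfl
  intro n
  induction n using Nat.strong_induction_on with
  | _ n ih =>
    intro p hp
    have IH : ∀ q, WytMove a b p q → (Even (R q) ↔ WytP a b q) := fun q hq =>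
      ih _ (hp ▸ move_sum_lt hq) q rfl
    by_cases hP : WytP a b p
    · refine iff_of_true ?_ hP
      by_cases hzero : p = (0, 0)
      · subst hzero
        rw [(hR _).1 no_move_zero]
        exact Even.zero
      · have hterm : ∃ q, WytMove a b p q := by
          rcases Nat.eq_zero_or_pos p.1 with h1 | h1
          · rcases Nat.eq_zero_or_pos p.2 with h2 | h2
            · exact absurd (Prod.ext h1 h2) hzero
            · exact ⟨(p.1, 0), le_rfl, Nat.zero_le _,
                by simp [Prod.ext_iff]; omega, Or.inr (by omega)⟩
          · exact ⟨(0, p.2), Nat.zero_le _, le_rfl,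
              by simp [Prod.ext_iff]; omega, Or.inr (by simp; omega)⟩
        have hodd : ∀ q, WytMove a b p q → ¬ Even (R q) := by
          intro q hq hqe
          exact P_no_move_P ha hb hP hq ((IH q hq).1 hqe)
        obtain ⟨y, hym, hyeq, -⟩ := (hR p).2.2 hterm hodd
        rw [hyeq]
        rcases Nat.even_or_odd (R y) with h | h
        · exact absurd h (hodd y hym)
        · exact Odd.add_one h
    · refine iff_of_false ?_ hP
      obtain ⟨q, hq, hqP⟩ := exists_move_P ha hb hP
      have hqe : Even (R q) := (IH q hq).2 hqP
      obtain ⟨y, hym, hye, hyeq, -⟩ := (hR p).2.1 ⟨q, hq, hqe⟩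
      rw [hyeq]
      simpa using hye.add_one

end Wyt

/-- The Smith remoteness function of WYT(a,b) satisfies `R(x_m, y_m) = 2m`
for every `m`. -/
theorem wyt_remoteness_pposition (a b : ℕ) (ha : 0 < a) (hb : 0 < b)
    (R : ℕ × ℕ → ℕ) (hR : IsRemoteness (WytMove a b) R) (m : ℕ) :
    R (wytX a b m, wytY a b m) = 2 * m := by
  induction m using Nat.strong_induction_on with
  | _ m ih =>
    rcases Nat.eq_zero_or_pos m with rfl | hm
    · rw [Wyt.wytX_zero, Wyt.wytY_zero, (hR _).1 Wyt.no_move_zero]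
    obtain ⟨n, rfl⟩ : ∃ n, m = n + 1 := ⟨m - 1, by omega⟩
    have hYdef : ∀ j, wytY a b j = wytX a b j + a * j := fun j => rfl
    have par := Wyt.parity ha hb hR
    have hPp : WytP a b (wytX a b (n + 1), wytY a b (n + 1)) := ⟨n + 1, Or.inl rfl⟩
    have hXmYm : wytX a b (n + 1) < wytY a b (n + 1) := by
      have h1 : 0 < a * (n + 1) := by positivity
      have h2 := hYdef (n + 1)
      omega
    -- Step 1: every move from (x_m, y_m) leads to a position of R-value ≤ 2n+1
    have step1 : ∀ q, WytMove a b (wytX a b (n + 1), wytY a b (n + 1)) q →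
        R q ≤ 2 * n + 1 := by
      intro q hq
      have hqnp : ¬ WytP a b q := fun h => Wyt.P_no_move_P ha hb hPp hq h
      obtain ⟨r, hr, hrP⟩ := Wyt.exists_move_P ha hb hqnp
      have hr1 : r.1 ≤ wytX a b (n + 1) := le_trans hr.1 hq.1
      have hr2 : r.2 ≤ wytY a b (n + 1) := le_trans hr.2.1 hq.2.1
      -- the index of r is < n+1, hence R r ≤ 2n and it is even
      have hRr : ∃ j, j < n + 1 ∧ R r = 2 * j := by
        obtain ⟨j, hj | hj⟩ := hrP
        · subst hj
          simp only at hr1 hr2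
          have hjm : j < n + 1 := by
            rcases Nat.lt_or_ge j (n + 1) with h | h
            · exact h
            · exfalso
              rcases eq_or_lt_of_le h with rfl | h'
              · apply hq.2.2.1
                have e1 : q.1 = wytX a b (n + 1) := le_antisymm hq.1 hr.1
                have e2 : q.2 = wytY a b (n + 1) := le_antisymm hq.2.1 hr.2.1
                exact Prod.ext e1 e2
              · exact absurd hr2 (not_le.2 (Wyt.wytY_lt_wytY ha hb h'))
          exact ⟨j, hjm, ih j hjm⟩
        · subst hj
          simp only at hr1 hr2
          have hjm : j < n + 1 := by
            by_contra hcon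
            push_neg at hcon
            have h1 : wytY a b (n + 1) ≤ wytY a b j := Wyt.wytY_le_of_le ha hb hcon
            omega
          refine ⟨j, hjm, ?_⟩
          rw [show ((wytY a b j, wytX a b j) : ℕ × ℕ) =
            ((wytX a b j, wytY a b j).2, (wytX a b j, wytY a b j).1) from rfl,
            Wyt.R_swap hR]
          exact ih j hjm
      obtain ⟨j, hjm, hRrval⟩ := hRr
      have hre : Even (R r) := by rw [hRrval]; exact ⟨j, by ring⟩
      obtain ⟨y, hym, hye, hyeq, hymin⟩ := (hR q).2.1 ⟨r, hr, hre⟩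
      have hle : R y ≤ R r := hymin r hr hre
      omega
    -- Step 2: the move to q₀ = (x_m, y_m - 1) has R-value exactly 2n+1
    have hym1 : 1 ≤ wytY a b (n + 1) := by omega
    have hq₀mv : WytMove a b (wytX a b (n + 1), wytY a b (n + 1))
        (wytX a b (n + 1), wytY a b (n + 1) - 1) := by
      refine ⟨le_rfl, by omega, ?_, Or.inr (by simp only; omega)⟩
      intro h; rw [Prod.mk.injEq] at h; omega
    -- every P-position reachable from q₀ has R-value exactly 2n
    have hclass : ∀ r, WytMove a b (wytX a b (n + 1), wytY a b (n + 1) - 1) r →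
        WytP a b r → R r = 2 * n := by
      intro r hr hrP
      obtain ⟨hcr1, hcr2, hcne, hcond⟩ := hr
      obtain ⟨j, hj | hj⟩ := hrP
      · -- r = (x_j, y_j) : only j = n is a legal move
        subst hj
        simp only at hcr1 hcr2 hcond
        have hjm : j < n + 1 := by
          by_contra hcon
          push_neg at hcon
          have h1 : wytY a b (n + 1) ≤ wytY a b j := Wyt.wytY_le_of_le ha hb hcon
          omega
        rcases eq_or_lt_of_le (Nat.lt_succ_iff.1 hjm) with rfl | hjn
        · exact ih j (by omega)
        · -- j < n : the move is illegal
          exfalso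
          have hXj : wytX a b j + b * (n + 1 - j) ≤ wytX a b (n + 1) :=
            Wyt.wytX_mono hb hjm
          have hb2 : b * 2 ≤ b * (n + 1 - j) := Nat.mul_le_mul_left b (by omega)
          have ha2 : a * 2 ≤ a * (n + 1 - j) := Nat.mul_le_mul_left a (by omega)
          have hsplit : a * (n + 1 - j) + a * j = a * (n + 1) := by
            rw [← Nat.mul_add, Nat.sub_add_cancel hjm.le]
          have hY1 := hYdef (n + 1)
          have hY2 := hYdef j
          rcases hcond with h | h
          · omega
          · omega
      · -- r = (y_j, x_j) : only possible when it equals (0, 0), j = 0, m = 1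
        subst hj
        simp only at hcr1 hcr2 hcond
        have hY1 := hYdef (n + 1)
        have hY2 := hYdef j
        have hjm : j < n + 1 := by
          by_contra hcon
          push_neg at hcon
          have h1 : wytY a b (n + 1) ≤ wytY a b j := Wyt.wytY_le_of_le ha hb hcon
          omega
        by_cases hsp : j = 0 ∧ n = 0
        · obtain ⟨rfl, rfl⟩ := hsp
          have e0 : wytY a b 0 = 0 := Wyt.wytY_zero
          have e1 : wytX a b 0 = 0 := Wyt.wytX_zero
          rw [e0, e1, show ((0, 0) : ℕ × ℕ) = (wytX a b 0, wytY a b 0) by rw [e0, e1]]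
          exact ih 0 (by omega)
        · -- otherwise the move is illegal
          exfalso
          have hmj2 : 2 ≤ (n + 1) + j := by omega
          have hYjne : wytY a b j ≠ wytX a b (n + 1) := by
            intro hEq
            apply Wyt.wytX_not_mem (a := a) hb (n + 1)
            rw [← hEq]
            exact Wyt.wytY_mem hjm
          have hgap : wytY a b j + b ≤ wytX a b (n + 1) := by
            refine Wyt.gap_lemma (Wyt.wytY_mem hjm) ?_
            omega
          have hxyj : wytX a b j ≤ wytY a b j := Wyt.wytX_le_wytY j
          have ha2 : a * 2 ≤ a * (n + 1) + a * j := by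
            calc a * 2 ≤ a * ((n + 1) + j) := Nat.mul_le_mul_left a hmj2
            _ = a * (n + 1) + a * j := by ring
          rcases hcond with h | h
          · omega
          · omega
    -- the move from q₀ to (x_n, y_n) is legal and even, so R q₀ = 2n + 1
    have hr₀mv : WytMove a b (wytX a b (n + 1), wytY a b (n + 1) - 1)
        (wytX a b n, wytY a b n) := by
      have hstep : wytX a b n + b ≤ wytX a b (n + 1) := Wyt.wytX_step hb n
      have hY1 := hYdef (n + 1)
      have hY2 := hYdef n
      have hsp : a * (n + 1) = a * n + a := by ring
      refine ⟨by simp only; omega, by simp only; omega, ?_, Or.inl (by simp only; omega)⟩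
      intro h; rw [Prod.mk.injEq] at h; omega
    have hr₀e : Even (R (wytX a b n, wytY a b n)) := by
      rw [ih n (by omega)]; exact ⟨n, by ring⟩
    obtain ⟨y₀, hy₀m, hy₀e, hy₀eq, -⟩ :=
      (hR (wytX a b (n + 1), wytY a b (n + 1) - 1)).2.1 ⟨_, hr₀mv, hr₀e⟩
    have hy₀P : WytP a b y₀ := (par y₀).1 hy₀e
    have hRq₀ : R (wytX a b (n + 1), wytY a b (n + 1) - 1) = 2 * n + 1 := by
      rw [hy₀eq, hclass y₀ hy₀m hy₀P]
    -- Step 3: conclude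
    have hodd : ∀ q, WytMove a b (wytX a b (n + 1), wytY a b (n + 1)) q →
        ¬ Even (R q) := by
      intro q hq hqe
      exact Wyt.P_no_move_P ha hb hPp hq ((par q).1 hqe)
    obtain ⟨y, hym, hyeq, hymax⟩ :=
      (hR (wytX a b (n + 1), wytY a b (n + 1))).2.2 ⟨_, hq₀mv⟩ hodd
    have h1 : R y ≤ 2 * n + 1 := step1 y hym
    have h2 : 2 * n + 1 ≤ R y := hRq₀ ▸ hymax _ hq₀mv
    rw [hyeq]
    omega
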